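/- arXiv:2312.00011 — 5 statements merged into one kernel-verified Lean document; each statement's English description precedes it below -/
import Mathlib

section
/- The Euler arctangent series holds: for every real r, arctan(r) = (r/(1+r²)) · Σ_{k=0}^∞ ((2k)!!/(2k+1)!!) · (r²/(1+r²))^k. -/
open Real

/-- (2k)!! = 2^k k! -/
noncomputable def evenDF (k : ℕ) : ℝ := 2 ^ k * k.factorial

/-- (2k+1)!! = (2k+1)!/(2^k k!) -/
noncomputable def oddDF (k : ℕ) : ℝ := (2 * k + 1).factorial / (2 ^ k * k.factorial)

noncomputable def eulerC (k : ℕ) : ℝ := 4 ^ k * (k.factorial : ℝ) ^ 2 / ((2 * k + 1).factorial : ℝ)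

lemma eulerC_pos (k : ℕ) : 0 < eulerC k := by
  unfold eulerC
  positivity

lemma eulerC_eq (k : ℕ) : evenDF k / oddDF k = eulerC k := by
  unfold evenDF oddDF eulerC
  have h1 : ((k.factorial : ℝ)) ≠ 0 := by positivity
  have h2 : ((2 * k + 1).factorial : ℝ) ≠ 0 := by positivity
  have h4 : (4 : ℝ) ^ k = 2 ^ k * 2 ^ k := by rw [← mul_pow]; norm_num
  rw [div_div_eq_mul_div, h4]
  ring

lemma eulerC_ratio (k : ℕ) : eulerC (k + 1) * (2 * k + 3) = eulerC k * (2 * k + 2) := by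
  unfold eulerC
  have h1 : (2 * (k + 1) + 1) = (2 * k + 2) + 1 := by ring
  rw [h1, Nat.factorial_succ, show (2 * k + 2) = (2 * k + 1) + 1 from rfl,
    Nat.factorial_succ, Nat.factorial_succ]
  have h2 : ((2 * k + 1).factorial : ℝ) ≠ 0 := by positivity
  have h3 : ((k.factorial : ℝ)) ≠ 0 := by positivity
  push_cast
  field_simp
  ring

lemma eulerC_le_one (k : ℕ) : eulerC k ≤ 1 := by
  induction k with
  | zero => simp [eulerC, Nat.factorial]
  | succ n ih =>
      have h := eulerC_ratio n
      have hp := eulerC_pos n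
      nlinarith [eulerC_pos (n + 1)]

lemma hasDerivAt_eulerTerm (k : ℕ) (x : ℝ) :
    HasDerivAt (fun y : ℝ => eulerC k * y ^ (2 * k + 1) / (1 + y ^ 2) ^ (k + 1))
      (eulerC k * ((2 * (k : ℝ) + 1) * x ^ (2 * k) / (1 + x ^ 2) ^ (k + 1)
        - (2 * (k : ℝ) + 2) * x ^ (2 * k + 2) / (1 + x ^ 2) ^ (k + 2))) x := by
  have hpos : (0 : ℝ) < 1 + x ^ 2 := by positivity
  have hne : (1 + x ^ 2) ≠ 0 := ne_of_gt hpos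
  have hne' : (1 + x ^ 2) ^ (k + 1) ≠ 0 := pow_ne_zero _ hne
  have h1 : HasDerivAt (fun y : ℝ => eulerC k * y ^ (2 * k + 1))
      (eulerC k * ((2 * (k : ℝ) + 1) * x ^ (2 * k))) x := by
    have := (hasDerivAt_pow (2 * k + 1) x).const_mul (eulerC k)
    exact this.congr_deriv (by push_cast; ring_nf)
  have hx2 : HasDerivAt (fun y : ℝ => 1 + y ^ 2) (2 * x) x := by
    simpa using (hasDerivAt_pow 2 x).const_add 1
  have h2 : HasDerivAt (fun y : ℝ => (1 + y ^ 2) ^ (k + 1))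
      (((k : ℝ) + 1) * (1 + x ^ 2) ^ k * (2 * x)) x := by
    have := hx2.pow (k + 1)
    exact this.congr_deriv (by simp)
  have := h1.div h2 hne'
  refine this.congr_deriv ?_
  field_simp
  ring

lemma hasDerivAt_eulerPhi (n : ℕ) (x : ℝ) :
    HasDerivAt (fun y : ℝ => Real.arctan y
        - ∑ k ∈ Finset.range n, eulerC k * y ^ (2 * k + 1) / (1 + y ^ 2) ^ (k + 1))
      ((2 * (n : ℝ) + 1) * eulerC n * x ^ (2 * n) / (1 + x ^ 2) ^ (n + 1)) x := by
  induction n with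
  | zero =>
      simp only [Finset.range_zero, Finset.sum_empty]
      have := Real.hasDerivAt_arctan x
      have h0 : eulerC 0 = 1 := by simp [eulerC, Nat.factorial]
      exact (this.sub (hasDerivAt_const x (0 : ℝ))).congr_deriv (by simp [h0])
  | succ n ih =>
      have ht := hasDerivAt_eulerTerm n x
      have := ih.sub ht
      have heq : (fun y : ℝ => Real.arctan y
          - ∑ k ∈ Finset.range (n + 1), eulerC k * y ^ (2 * k + 1) / (1 + y ^ 2) ^ (k + 1))
          = (fun y : ℝ => (Real.arctan y
            - ∑ k ∈ Finset.range n, eulerC k * y ^ (2 * k + 1) / (1 + y ^ 2) ^ (k + 1))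
            - eulerC n * y ^ (2 * n + 1) / (1 + y ^ 2) ^ (n + 1)) := by
        funext y
        rw [Finset.sum_range_succ]
        ring
      rw [heq]
      refine this.congr_deriv ?_
      have hratio := eulerC_ratio n
      have hne : (1 + x ^ 2) ≠ 0 := by positivity
      have h1 : (2 * ((n : ℝ) + 1) + 1) * eulerC (n + 1) = (2 * (n : ℝ) + 2) * eulerC n := by
        have : ((n : ℝ) + 1) = ((n + 1 : ℕ) : ℝ) := by push_cast; ring
        push_cast at hratio ⊢
        linarith
      push_cast
      rw [show (2 * ((n : ℝ) + 1) + 1) * eulerC (n + 1) * x ^ (2 * (n + 1)) / (1 + x ^ 2) ^ (n + 1 + 1)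
          = ((2 * ((n : ℝ) + 1) + 1) * eulerC (n + 1)) * x ^ (2 * (n + 1)) / (1 + x ^ 2) ^ (n + 1 + 1) from by ring,
        h1]
      field_simp
      ring

lemma eulerPhi_bound (r : ℝ) (n : ℕ) :
    |Real.arctan r - ∑ k ∈ Finset.range n, eulerC k * r ^ (2 * k + 1) / (1 + r ^ 2) ^ (k + 1)|
      ≤ (2 * (n : ℝ) + 1) * (r ^ 2 / (1 + r ^ 2)) ^ n * |r| := by
  set Y := r ^ 2 / (1 + r ^ 2) with hY
  have hden : (0 : ℝ) < 1 + r ^ 2 := by positivity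
  have hY0 : 0 ≤ Y := by positivity
  set f : ℝ → ℝ := fun y => Real.arctan y
      - ∑ k ∈ Finset.range n, eulerC k * y ^ (2 * k + 1) / (1 + y ^ 2) ^ (k + 1) with hf
  set f' : ℝ → ℝ := fun x => (2 * (n : ℝ) + 1) * eulerC n * x ^ (2 * n) / (1 + x ^ 2) ^ (n + 1)
    with hf'
  have key : ∀ x ∈ Set.uIcc (0 : ℝ) r, HasDerivWithinAt f (f' x) (Set.uIcc (0 : ℝ) r) x :=
    fun x _ => (hasDerivAt_eulerPhi n x).hasDerivWithinAt
  have bound : ∀ x ∈ Set.uIcc (0 : ℝ) r, ‖f' x‖ ≤ (2 * (n : ℝ) + 1) * Y ^ n := by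
    intro x hx
    have hxd : (0 : ℝ) < 1 + x ^ 2 := by positivity
    have hx2 : x ^ 2 ≤ r ^ 2 := by
      rcases Set.mem_uIcc.1 hx with ⟨h1, h2⟩ | ⟨h1, h2⟩ <;> nlinarith
    have hYx : x ^ 2 / (1 + x ^ 2) ≤ Y := by
      rw [div_le_div_iff₀ hxd hden]
      nlinarith
    have hstep : x ^ (2 * n) / (1 + x ^ 2) ^ (n + 1) ≤ Y ^ n := by
      have e1 : x ^ (2 * n) / (1 + x ^ 2) ^ (n + 1)
          = (x ^ 2 / (1 + x ^ 2)) ^ n * (1 / (1 + x ^ 2)) := by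
        rw [div_pow, ← pow_mul, pow_succ, ← div_div, mul_one_div]
      rw [e1]
      have h1 : (x ^ 2 / (1 + x ^ 2)) ^ n ≤ Y ^ n :=
        pow_le_pow_left₀ (by positivity) hYx n
      have h2 : 1 / (1 + x ^ 2) ≤ 1 := by
        rw [div_le_one hxd]; nlinarith [sq_nonneg x]
      have h12 : (x ^ 2 / (1 + x ^ 2)) ^ n * (1 / (1 + x ^ 2)) ≤ Y ^ n * 1 :=
        mul_le_mul h1 h2 (by positivity) (pow_nonneg hY0 n)
      simpa using h12
    have hfx : f' x = (2 * (n : ℝ) + 1) * eulerC n * (x ^ (2 * n) / (1 + x ^ 2) ^ (n + 1)) := by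
      rw [hf']; ring
    rw [Real.norm_eq_abs, hfx, abs_mul]
    have h3 : |(2 * (n : ℝ) + 1) * eulerC n| ≤ 2 * (n : ℝ) + 1 := by
      rw [abs_mul]
      have := eulerC_le_one n
      have := (eulerC_pos n).le
      rw [abs_of_nonneg (by positivity : (0:ℝ) ≤ 2 * (n : ℝ) + 1),
        abs_of_nonneg (eulerC_pos n).le]
      nlinarith
    have h4 : |x ^ (2 * n) / (1 + x ^ 2) ^ (n + 1)| ≤ Y ^ n := by
      rw [abs_of_nonneg (div_nonneg (by rw [pow_mul]; positivity) (by positivity))]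
      exact hstep
    have hfin := mul_le_mul h3 h4 (abs_nonneg _) (by positivity : (0:ℝ) ≤ 2 * (n : ℝ) + 1)
    simpa using hfin
  have := (convex_uIcc (0 : ℝ) r).norm_image_sub_le_of_norm_hasDerivWithin_le key bound
    (Set.left_mem_uIcc) (Set.right_mem_uIcc)
  have hf0 : f 0 = 0 := by
    simp [hf, Real.arctan_zero]
  rw [hf0, sub_zero, Real.norm_eq_abs, Real.norm_eq_abs, sub_zero] at this
  exact this

theorem euler_arctan_series (r : ℝ) :
    Real.arctan r =
      (r / (1 + r ^ 2)) *
        ∑' k : ℕ, (evenDF k / oddDF k) * (r ^ 2 / (1 + r ^ 2)) ^ k := by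
  have hden : (0 : ℝ) < 1 + r ^ 2 := by positivity
  have hne : (1 + r ^ 2) ≠ 0 := ne_of_gt hden
  set Y := r ^ 2 / (1 + r ^ 2) with hY
  have hY0 : 0 ≤ Y := by positivity
  have hY1 : Y < 1 := by
    rw [hY, div_lt_one hden]; linarith
  -- the term as a function of k
  set t : ℕ → ℝ := fun k => eulerC k * r ^ (2 * k + 1) / (1 + r ^ 2) ^ (k + 1) with ht
  have hterm : ∀ k, t k = (r / (1 + r ^ 2)) * (eulerC k * Y ^ k) := by
    intro k
    rw [ht, hY, div_pow, ← pow_mul]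
    field_simp
    ring
  -- summability
  have hsummable : Summable t := by
    apply Summable.of_norm_bounded (g := fun k => (|r| / (1 + r ^ 2)) * Y ^ k)
      (((summable_geometric_of_lt_one hY0 hY1).mul_left _))
    intro k
    rw [hterm k, norm_mul, Real.norm_eq_abs, Real.norm_eq_abs, abs_mul]
    have h1 : |r / (1 + r ^ 2)| = |r| / (1 + r ^ 2) := by
      rw [abs_div, abs_of_pos hden]
    have h2 : |eulerC k| ≤ 1 := by
      rw [abs_of_pos (eulerC_pos k)]; exact eulerC_le_one k
    have h3 : |Y ^ k| = Y ^ k := abs_of_nonneg (by positivity)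
    rw [h1, h3]
    have : |eulerC k| * Y ^ k ≤ 1 * Y ^ k :=
      mul_le_mul_of_nonneg_right h2 (by positivity)
    nlinarith [abs_nonneg r, div_nonneg (abs_nonneg r) hden.le]
  -- partial sums tend to arctan r
  have htend : Filter.Tendsto (fun n => ∑ k ∈ Finset.range n, t k)
      Filter.atTop (nhds (Real.arctan r)) := by
    rw [tendsto_iff_dist_tendsto_zero]
    have hbd : ∀ n : ℕ, dist (∑ k ∈ Finset.range n, t k) (Real.arctan r)
        ≤ (2 * (n : ℝ) + 1) * Y ^ n * |r| := by
      intro n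
      rw [Real.dist_eq, abs_sub_comm]
      exact eulerPhi_bound r n
    have h1 : Filter.Tendsto (fun n : ℕ => (2 * (n : ℝ) + 1) * Y ^ n)
        Filter.atTop (nhds 0) := by
      have hs : Summable (fun n : ℕ => (2 * (n : ℝ) + 1) * Y ^ n) := by
        have hs1 : Summable (fun n : ℕ => (n : ℝ) ^ 1 * Y ^ n) :=
          summable_pow_mul_geometric_of_norm_lt_one 1
            (by rw [Real.norm_eq_abs, abs_of_nonneg hY0]; exact hY1)
        have hs2 : Summable (fun n : ℕ => Y ^ n) :=
          summable_geometric_of_lt_one hY0 hY1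
        apply ((hs1.mul_left 2).add hs2).congr
        intro n
        push_cast
        ring
      simpa using hs.tendsto_atTop_zero
    have hg := h1.mul_const |r|
    rw [zero_mul] at hg
    exact squeeze_zero (fun n => dist_nonneg) hbd hg
  have htsum : HasSum t (Real.arctan r) := by
    have h := hsummable.hasSum
    have h2 := h.tendsto_sum_nat
    rwa [tendsto_nhds_unique h2 htend] at h
  rw [← htsum.tsum_eq, ← tsum_mul_left]
  apply tsum_congr
  intro k
  rw [hterm k, eulerC_eq k]
end

section
/- If the Euler arctangent series arctan(r) = (r/(1+r²)) Σ_{k=0}^∞ ((2k)!!/(2k+1)!!)(r²/(1+r²))^k is truncated after the n-th term (n ≥ -1), then the remainder R_n = (r/(1+r²)) Σ_{k=n+1}^∞ ((2k)!!/(2k+1)!!)(r²/(1+r²))^k has the same sign as r and satisfies B_n ≤ |R_n| ≤ (1+r²) B_n, where B_n = ((2n+2)!!/(2n+3)!!) · (|r|/(1+r²)) · (r²/(1+r²))^{n+1}. -/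
open Real

lemma evenDF_pos (k : ℕ) : 0 < evenDF k := by
  unfold evenDF
  have := k.factorial_pos
  positivity

lemma oddDF_pos (k : ℕ) : 0 < oddDF k := by
  unfold oddDF
  have := (2*k+1).factorial_pos
  have := k.factorial_pos
  positivity

lemma c_succ_le (k : ℕ) : evenDF (k+1) / oddDF (k+1) ≤ evenDF k / oddDF k := by
  rw [div_le_div_iff₀ (oddDF_pos _) (oddDF_pos _)]
  unfold evenDF oddDF
  have hf : (((2*(k+1)+1).factorial : ℕ) : ℝ)
      = (2*k+3) * ((2*k+2) * (2*k+1).factorial) := by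
    have h : 2*(k+1)+1 = (2*k+1)+1+1 := by ring
    rw [h, Nat.factorial_succ, Nat.factorial_succ]
    push_cast
    ring
  rw [hf]
  have h1 : (0:ℝ) < (k.factorial : ℝ) := by exact_mod_cast k.factorial_pos
  have h2 : (0:ℝ) < ((k+1).factorial : ℝ) := by exact_mod_cast (k+1).factorial_pos
  have h3 : (0:ℝ) < ((2*k+1).factorial : ℝ) := by exact_mod_cast (2*k+1).factorial_pos
  have hfs : ((k+1).factorial : ℝ) = (k+1) * k.factorial := by
    rw [Nat.factorial_succ]; push_cast; ring
  rw [hfs]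
  have hp : (0:ℝ) < 2 ^ k := by positivity
  rw [mul_div_assoc', mul_div_assoc', div_le_div_iff₀ (by positivity) (by positivity)]
  rw [pow_succ]
  ring_nf
  have h4 : (0:ℝ) < ((1 + k * 2).factorial : ℝ) := by exact_mod_cast (1 + k*2).factorial_pos
  have hP : (0:ℝ) < (k.factorial:ℝ)^2 * ((1+k*2).factorial:ℝ) * 2^(k*2) := by positivity
  have hk : (0:ℝ) ≤ (k:ℝ) := Nat.cast_nonneg k
  nlinarith [hP, mul_nonneg hk hP.le]

lemma c_add_le (k m : ℕ) : evenDF (k+m) / oddDF (k+m) ≤ evenDF m / oddDF m := by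
  induction k with
  | zero => simp
  | succ k ih =>
      have h : k + 1 + m = (k + m) + 1 := by omega
      rw [h]
      exact le_trans (c_succ_le (k+m)) ih

/-- Remainder bound for the Euler arctangent series, truncated after the `n`-th
term with `n ≥ -1`; here `m = n + 1 : ℕ` so that the remainder is the tail
starting at index `m`.  The remainder has the same sign as `r` and is bounded
by `B_n ≤ |R_n| ≤ (1+r²) B_n`. -/
theorem euler_arctan_remainder (r : ℝ) (m : ℕ) :
    (0 ≤ r → 0 ≤ (r / (1 + r ^ 2)) *
        ∑' k : ℕ, (evenDF (k + m) / oddDF (k + m)) * (r ^ 2 / (1 + r ^ 2)) ^ (k + m)) ∧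
    (r ≤ 0 → (r / (1 + r ^ 2)) *
        ∑' k : ℕ, (evenDF (k + m) / oddDF (k + m)) * (r ^ 2 / (1 + r ^ 2)) ^ (k + m) ≤ 0) ∧
    (evenDF m / oddDF m) * (|r| / (1 + r ^ 2)) * (r ^ 2 / (1 + r ^ 2)) ^ m ≤
      |(r / (1 + r ^ 2)) *
        ∑' k : ℕ, (evenDF (k + m) / oddDF (k + m)) * (r ^ 2 / (1 + r ^ 2)) ^ (k + m)| ∧
    |(r / (1 + r ^ 2)) *
        ∑' k : ℕ, (evenDF (k + m) / oddDF (k + m)) * (r ^ 2 / (1 + r ^ 2)) ^ (k + m)| ≤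
      (1 + r ^ 2) * ((evenDF m / oddDF m) * (|r| / (1 + r ^ 2)) * (r ^ 2 / (1 + r ^ 2)) ^ m) := by
  set s : ℝ := 1 + r ^ 2 with hs
  have hspos : 0 < s := by positivity
  set x : ℝ := r ^ 2 / s with hx
  have hx0 : 0 ≤ x := by positivity
  have hx1 : x < 1 := by
    rw [hx, div_lt_one hspos]; nlinarith
  set f : ℕ → ℝ := fun k => (evenDF (k + m) / oddDF (k + m)) * x ^ (k + m) with hf
  have hfnn : ∀ k, 0 ≤ f k := fun k =>
    mul_nonneg (le_of_lt (div_pos (evenDF_pos _) (oddDF_pos _))) (pow_nonneg hx0 _)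
  have hfle : ∀ k, f k ≤ (evenDF m / oddDF m) * x ^ m * x ^ k := by
    intro k
    have h1 : x ^ (k + m) = x ^ m * x ^ k := by rw [pow_add]; ring
    calc f k ≤ (evenDF m / oddDF m) * x ^ (k + m) :=
          mul_le_mul_of_nonneg_right (c_add_le k m) (pow_nonneg hx0 _)
      _ = (evenDF m / oddDF m) * x ^ m * x ^ k := by rw [h1]; ring
  have hsumgeo : Summable (fun k : ℕ => (evenDF m / oddDF m) * x ^ m * x ^ k) :=
    (summable_geometric_of_lt_one hx0 hx1).mul_left _
  have hsum : Summable f := Summable.of_nonneg_of_le hfnn hfle hsumgeo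
  have hT0 : 0 ≤ ∑' k, f k := tsum_nonneg hfnn
  have hTlow : (evenDF m / oddDF m) * x ^ m ≤ ∑' k, f k := by
    have := Summable.le_tsum hsum 0 (fun j _ => hfnn j)
    simpa [hf] using this
  have hTup : ∑' k, f k ≤ (evenDF m / oddDF m) * x ^ m * s := by
    calc ∑' k, f k ≤ ∑' k, (evenDF m / oddDF m) * x ^ m * x ^ k :=
          Summable.tsum_le_tsum hfle hsum hsumgeo
      _ = (evenDF m / oddDF m) * x ^ m * (1 - x)⁻¹ := by
          rw [tsum_mul_left, tsum_geometric_of_lt_one hx0 hx1]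
      _ = (evenDF m / oddDF m) * x ^ m * s := by
          congr 1
          have : 1 - x = 1 / s := by
            rw [hx]; field_simp; rw [hs]; ring
          rw [this]; simp
  have habs : |(r / s) * ∑' k, f k| = (|r| / s) * ∑' k, f k := by
    rw [abs_mul, abs_div, abs_of_pos hspos, abs_of_nonneg hT0]
  refine ⟨fun hr => mul_nonneg (div_nonneg hr hspos.le) hT0,
    fun hr => mul_nonpos_of_nonpos_of_nonneg (div_nonpos_of_nonpos_of_nonneg hr hspos.le) hT0,
    ?_, ?_⟩
  · rw [habs]
    have hrs : 0 ≤ |r| / s := div_nonneg (abs_nonneg r) hspos.le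
    calc (evenDF m / oddDF m) * (|r| / s) * x ^ m
        = (|r| / s) * ((evenDF m / oddDF m) * x ^ m) := by ring
      _ ≤ (|r| / s) * ∑' k, f k := mul_le_mul_of_nonneg_left hTlow hrs
  · rw [habs]
    have hrs : 0 ≤ |r| / s := div_nonneg (abs_nonneg r) hspos.le
    calc (|r| / s) * ∑' k, f k
        ≤ (|r| / s) * ((evenDF m / oddDF m) * x ^ m * s) := mul_le_mul_of_nonneg_left hTup hrs
      _ = s * ((evenDF m / oddDF m) * (|r| / s) * x ^ m) := by ring
end

section
/- For every real r, √(kπ)/(2k+1) < (2k)!!/(2k+1)!! < √((k+1)π)/(2k+1) for all k ≥ 1. -/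
open Real

theorem doubleFactorial_ratio_bounds (k : ℕ) (hk : 1 ≤ k) :
    Real.sqrt (k * Real.pi) / (2 * k + 1) < evenDF k / oddDF k ∧
    evenDF k / oddDF k < Real.sqrt ((k + 1) * Real.pi) / (2 * k + 1) := by
  have hW := Real.Wallis.le_W k
  have hW2 := Real.Wallis.W_le k
  have hWeq := Real.Wallis.W_eq_factorial_ratio k
  have hWpos := Real.Wallis.W_pos k
  set K : ℝ := (k : ℝ) with hK
  have hK0 : (0:ℝ) ≤ K := Nat.cast_nonneg k
  have h2K1 : (0:ℝ) < 2 * K + 1 := by positivity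
  have h2K2 : (0:ℝ) < 2 * K + 2 := by positivity
  -- A := evenDF k / oddDF k
  set A : ℝ := evenDF k / oddDF k with hA
  have hfacpos : (0:ℝ) < ((2 * k).factorial : ℝ) := by exact_mod_cast Nat.factorial_pos _
  have hkfacpos : (0:ℝ) < ((k).factorial : ℝ) := by exact_mod_cast Nat.factorial_pos _
  have hpowpos : (0:ℝ) < (2:ℝ) ^ k := by positivity
  have hfac : ((2 * k + 1).factorial : ℝ) = (2 * K + 1) * ((2 * k).factorial : ℝ) := by
    rw [Nat.factorial_succ]
    push_cast
    ring
  have hApos : 0 < A := by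
    rw [hA, evenDF, oddDF]
    have : (0:ℝ) < ((2 * k + 1).factorial : ℝ) := by exact_mod_cast Nat.factorial_pos _
    positivity
  have hsq : (A * (2 * K + 1)) ^ 2 = (2 * K + 1) * Real.Wallis.W k := by
    rw [hWeq, hA, evenDF, oddDF, hfac]
    field_simp
    ring
  have hlow : K * π < (2 * K + 1) * Real.Wallis.W k := by
    have hW' : (2 * K + 1) * (π / 2) ≤ Real.Wallis.W k * (2 * K + 2) := by
      rwa [div_mul_eq_mul_div, div_le_iff₀ h2K2] at hW
    nlinarith [pi_pos, hW', h2K1.le, h2K2, hWpos]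
  have hhigh : (2 * K + 1) * Real.Wallis.W k < (K + 1) * π := by
    nlinarith [pi_pos, hW2, h2K1.le]
  have hAK : 0 < A * (2 * K + 1) := mul_pos hApos h2K1
  constructor
  · rw [div_lt_iff₀ h2K1]
    rw [Real.sqrt_lt' hAK, hsq]
    exact hlow
  · rw [lt_div_iff₀ h2K1]
    rw [Real.lt_sqrt hAK.le, hsq]
    exact hhigh
end

section
/- For k ∈ ℕ and 0 ≤ x ≤ (k+2)/2, one has x^{k+1} e^{-x}/(k+1)! ≤ P(k+1, x) ≤ 2 x^{k+1} e^{-x}/(k+1)!, with equality only at x = 0. -/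
open Real

open Finset in
private lemma hasSum_exp_real' (x : ℝ) :
    HasSum (fun n : ℕ => x ^ n / n.factorial) (Real.exp x) := by
  rw [Real.exp_eq_exp_ℝ]
  exact NormedSpace.expSeries_div_hasSum_exp x

open Finset in
private lemma tail_eq' (k : ℕ) (x : ℝ) :
    Real.exp x - ∑ j ∈ range (k+1), x ^ j / j.factorial
      = ∑' n : ℕ, x ^ (n + (k+1)) / (n + (k+1)).factorial := by
  have hs := (hasSum_exp_real' x).summable
  have h := Summable.sum_add_tsum_nat_add (k+1) hs
  rw [(hasSum_exp_real' x).tsum_eq] at h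
  linarith [h]

open Finset in
private lemma hasDerivAt_partial' (k : ℕ) (t : ℝ) :
    HasDerivAt (fun t : ℝ => ∑ j ∈ range (k+1), t ^ j / j.factorial)
      (∑ j ∈ range k, t ^ j / j.factorial) t := by
  have h : HasDerivAt (fun t : ℝ => ∑ j ∈ range (k+1), t ^ j / j.factorial)
      (∑ j ∈ range (k+1), (j : ℝ) * t ^ (j-1) / j.factorial) t := by
    apply HasDerivAt.fun_sum
    intro j _
    exact (hasDerivAt_pow j t).div_const _
  convert h using 1
  rw [Finset.sum_range_succ']
  simp only [Nat.cast_zero, zero_mul, zero_div, add_zero, Nat.add_sub_cancel]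
  apply Finset.sum_congr rfl
  intro i _
  rw [Nat.factorial_succ]
  have h1 : ((i:ℝ) + 1) ≠ 0 := by positivity
  have h2 : ((i.factorial : ℝ)) ≠ 0 := by positivity
  push_cast
  field_simp

open Finset in
private lemma integral_eq' (k : ℕ) (x : ℝ) :
    ∫ t in (0:ℝ)..x, t ^ k * Real.exp (-t)
      = k.factorial * (1 - Real.exp (-x) * ∑ j ∈ range (k+1), x ^ j / j.factorial) := by
  have key : ∀ t : ℝ, HasDerivAt
      (fun t => (k.factorial : ℝ) *
        (1 - Real.exp (-t) * ∑ j ∈ range (k+1), t ^ j / j.factorial))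
      (t ^ k * Real.exp (-t)) t := by
    intro t
    have h1 : HasDerivAt (fun t : ℝ => Real.exp (-t)) (-Real.exp (-t)) t := by
      simpa using (hasDerivAt_neg t).exp
    have h2 := hasDerivAt_partial' k t
    have h3 := ((hasDerivAt_const t (1:ℝ)).fun_sub (h1.fun_mul h2)).const_mul (k.factorial : ℝ)
    refine h3.congr_deriv ?_
    have hP : ∑ j ∈ range (k+1), t^j/(j.factorial : ℝ)
        = (∑ j ∈ range k, t^j/j.factorial) + t^k/k.factorial := Finset.sum_range_succ _ _
    have hfac : ((k.factorial : ℝ)) ≠ 0 := by positivity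
    rw [hP]
    field_simp
    ring
  have hint : IntervalIntegrable (fun t : ℝ => t ^ k * Real.exp (-t))
      MeasureTheory.volume 0 x := by
    apply Continuous.intervalIntegrable
    exact (continuous_pow k).mul (Real.continuous_exp.comp continuous_neg)
  have := intervalIntegral.integral_eq_sub_of_hasDerivAt (fun t _ => key t) hint
  rw [this]
  have h0 : ∑ j ∈ range (k+1), (0:ℝ) ^ j / j.factorial = 1 := by
    rw [Finset.sum_range_succ']
    simp
  simp [h0]

open Finset in
private lemma term_le' (k : ℕ) {x : ℝ} (hx0 : 0 ≤ x) (hx1 : x ≤ (k + 2) / 2) (n : ℕ) :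
    x ^ (n + (k+1)) / (n + (k+1)).factorial
      ≤ x ^ (k+1) / (k+1).factorial * (1/2)^n := by
  induction n with
  | zero => simp
  | succ n ih =>
    have h1 : x ^ (n + 1 + (k+1)) / ((n + 1 + (k+1)).factorial : ℝ)
        = x ^ (n + (k+1)) / (n + (k+1)).factorial * (x / ((n:ℝ) + (k+1) + 1)) := by
      rw [show n+1+(k+1) = (n+(k+1))+1 by ring, pow_succ, Nat.factorial_succ,
        div_mul_div_comm]
      congr 1
      push_cast
      ring
    have h2 : x / ((n:ℝ) + (k+1) + 1) ≤ 1/2 := by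
      rw [div_le_div_iff₀ (by positivity) (by norm_num)]
      push_cast at hx1 ⊢
      nlinarith
    calc x ^ (n + 1 + (k+1)) / ((n + 1 + (k+1)).factorial : ℝ)
        = x ^ (n + (k+1)) / (n + (k+1)).factorial * (x / ((n:ℝ) + (k+1) + 1)) := h1
      _ ≤ (x ^ (k+1) / (k+1).factorial * (1/2)^n) * (1/2) := by
          apply mul_le_mul ih h2 (by positivity) (by positivity)
      _ = x ^ (k+1) / (k+1).factorial * (1/2)^(n+1) := by rw [pow_succ]; ring

private lemma summable_geom' (k : ℕ) (x : ℝ) :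
    Summable (fun n : ℕ => x ^ (k+1) / (k+1).factorial * (1/2)^n) :=
  (summable_geometric_of_lt_one (by norm_num) (by norm_num)).mul_left _

private lemma tsum_geom' (k : ℕ) (x : ℝ) :
    ∑' n : ℕ, x ^ (k+1) / ((k+1).factorial : ℝ) * (1/2)^n
      = 2 * x ^ (k+1) / (k+1).factorial := by
  rw [tsum_mul_left, tsum_geometric_of_lt_one (by norm_num) (by norm_num)]
  norm_num
  ring

open Finset in
private lemma tail_le' (k : ℕ) {x : ℝ} (hx0 : 0 ≤ x) (hx1 : x ≤ (k + 2) / 2) :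
    Real.exp x - ∑ j ∈ range (k+1), x ^ j / j.factorial
      ≤ 2 * x ^ (k+1) / (k+1).factorial := by
  rw [tail_eq', ← tsum_geom' k x]
  have hsum : Summable (fun n : ℕ => x ^ (n + (k+1)) / ((n + (k+1)).factorial : ℝ)) := by
    exact_mod_cast (summable_nat_add_iff (k+1)).2 (Real.summable_pow_div_factorial x)
  exact Summable.tsum_le_tsum (term_le' k hx0 hx1) hsum (summable_geom' k x)

open Finset in
private lemma tail_lt' (k : ℕ) {x : ℝ} (hx0 : 0 < x) (hx1 : x ≤ (k + 2) / 2) :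
    Real.exp x - ∑ j ∈ range (k+1), x ^ j / j.factorial
      < 2 * x ^ (k+1) / (k+1).factorial := by
  rw [tail_eq', ← tsum_geom' k x]
  apply Summable.tsum_lt_tsum_of_nonneg (i := 2)
  · intro n; positivity
  · exact term_le' k hx0.le hx1
  · -- strict at n = 2
    have e1 : ((2 + (k+1)).factorial : ℝ)
        = (k+1).factorial * (((k:ℝ)+2) * ((k:ℝ)+3)) := by
      rw [show 2 + (k+1) = (k+2)+1 by ring, Nat.factorial_succ,
        show k+2 = (k+1)+1 from rfl, Nat.factorial_succ]
      push_cast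
      ring
    have hp : (0:ℝ) < x ^ (k+1) := pow_pos hx0 _
    have hfp : (0:ℝ) < ((k+1).factorial : ℝ) := by positivity
    have hq : 4 * x^2 < ((k:ℝ)+2) * ((k:ℝ)+3) := by nlinarith
    rw [e1, show 2 + (k+1) = (k+1) + 2 by ring, pow_add,
      div_lt_iff₀ (by positivity)]
    have : x ^ (k+1) / ((k+1).factorial : ℝ) * (1/2)^2
          * ((k+1).factorial * (((k:ℝ)+2) * ((k:ℝ)+3)))
        = x ^ (k+1) * ((((k:ℝ)+2) * ((k:ℝ)+3)) / 4) := by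
      field_simp
      ring
    rw [this]
    nlinarith [mul_pos hp hfp]
  · exact summable_geom' k x

open Finset in
private lemma tail_ge' (k : ℕ) {x : ℝ} (hx0 : 0 ≤ x) :
    x ^ (k+1) / (k+1).factorial
      ≤ Real.exp x - ∑ j ∈ range (k+1), x ^ j / j.factorial := by
  have h := Real.sum_le_exp_of_nonneg hx0 (k+2)
  rw [Finset.sum_range_succ] at h
  linarith

open Finset in
private lemma tail_gt' (k : ℕ) {x : ℝ} (hx0 : 0 < x) :
    x ^ (k+1) / (k+1).factorial
      < Real.exp x - ∑ j ∈ range (k+1), x ^ j / j.factorial := by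
  have h := Real.sum_le_exp_of_nonneg hx0.le (k+3)
  rw [Finset.sum_range_succ, Finset.sum_range_succ] at h
  have hpos : (0:ℝ) < x ^ (k+2) / (k+2).factorial := by positivity
  linarith

/-- Lower regularized incomplete gamma function P(a,x) = γ(a,x)/Γ(a). -/
noncomputable def regGammaP (a x : ℝ) : ℝ :=
  (∫ t in (0:ℝ)..x, t ^ (a - 1) * Real.exp (-t)) / Real.Gamma a

theorem regGammaP_bounds (k : ℕ) (x : ℝ) (hx0 : 0 ≤ x) (hx1 : x ≤ (k + 2) / 2) :
    x ^ (k + 1) * Real.exp (-x) / (k + 1).factorial ≤ regGammaP (k + 1) x ∧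
    regGammaP (k + 1) x ≤ 2 * x ^ (k + 1) * Real.exp (-x) / (k + 1).factorial ∧
    (x ≠ 0 →
      x ^ (k + 1) * Real.exp (-x) / (k + 1).factorial < regGammaP (k + 1) x ∧
      regGammaP (k + 1) x < 2 * x ^ (k + 1) * Real.exp (-x) / (k + 1).factorial) := by
  have hreg : regGammaP (k + 1) x = Real.exp (-x) *
      (Real.exp x - ∑ j ∈ Finset.range (k+1), x ^ j / j.factorial) := by
    unfold regGammaP
    have hcongr : (∫ t in (0:ℝ)..x, t ^ ((k:ℝ) + 1 - 1) * Real.exp (-t))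
        = ∫ t in (0:ℝ)..x, t ^ k * Real.exp (-t) := by
      apply intervalIntegral.integral_congr
      intro t _
      show t ^ ((k:ℝ) + 1 - 1) * Real.exp (-t) = t ^ k * Real.exp (-t)
      rw [show ((k:ℝ) + 1 - 1) = (k : ℝ) by ring, Real.rpow_natCast]
    rw [hcongr, integral_eq' k x, Real.Gamma_nat_eq_factorial k]
    have hfac : ((k.factorial : ℝ)) ≠ 0 := by positivity
    have hexp : Real.exp (-x) * Real.exp x = 1 := by
      rw [← Real.exp_add]; simp
    rw [mul_comm ((k.factorial : ℝ)), mul_div_assoc, div_self hfac, mul_one, mul_sub, hexp]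
  have he : (0:ℝ) < Real.exp (-x) := Real.exp_pos _
  have hle := tail_le' k hx0 hx1
  have hge := tail_ge' k hx0
  refine ⟨?_, ?_, ?_⟩
  · rw [hreg]
    calc x ^ (k + 1) * Real.exp (-x) / (k + 1).factorial
        = Real.exp (-x) * (x ^ (k+1) / (k+1).factorial) := by ring
      _ ≤ _ := mul_le_mul_of_nonneg_left hge he.le
  · rw [hreg]
    calc Real.exp (-x) * (Real.exp x - ∑ j ∈ Finset.range (k+1), x ^ j / j.factorial)
        ≤ Real.exp (-x) * (2 * x ^ (k+1) / (k+1).factorial) :=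
          mul_le_mul_of_nonneg_left hle he.le
      _ = 2 * x ^ (k + 1) * Real.exp (-x) / (k + 1).factorial := by ring
  · intro hxne
    have hx : 0 < x := lt_of_le_of_ne hx0 (Ne.symm hxne)
    constructor
    · rw [hreg]
      calc x ^ (k + 1) * Real.exp (-x) / (k + 1).factorial
          = Real.exp (-x) * (x ^ (k+1) / (k+1).factorial) := by ring
        _ < _ := by
            exact mul_lt_mul_of_pos_left (tail_gt' k hx) he
    · rw [hreg]
      calc Real.exp (-x) * (Real.exp x - ∑ j ∈ Finset.range (k+1), x ^ j / j.factorial)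
          < Real.exp (-x) * (2 * x ^ (k+1) / (k+1).factorial) :=
            mul_lt_mul_of_pos_left (tail_lt' k hx hx1) he
        _ = 2 * x ^ (k + 1) * Real.exp (-x) / (k + 1).factorial := by ring
end

section
/- If the series S = Σ_{k=0}^∞ c_k (r²/(1+r²))^k with c_k = ((2k)!!/(2k+1)!!) P(k+1, q), q = (1+r²)h²/2, is truncated after the n-th term, then the tail R_n = (|r|/(2π(1+r²))) Σ_{k=n+1}^∞ c_k (r²/(1+r²))^k satisfies 0 ≤ R_n ≤ B_n/(1 + e^{-q} r²) ≤ B_n, where B_n = ((2n+2)!!/(2n+3)!!) (|r|/(2π)) (1−e^{-q})^{n+2} (r²/(1+r²))^{n+1}. -/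
open Real MeasureTheory

/- ### Auxiliary lemmas -/

private lemma my_I_nonneg (n : ℕ) {x : ℝ} (hx : 0 ≤ x) :
    0 ≤ ∫ t in (0:ℝ)..x, t ^ n * Real.exp (-t) := by
  apply intervalIntegral.integral_nonneg hx
  intro t ht
  exact mul_nonneg (pow_nonneg ht.1 n) (Real.exp_nonneg _)

private lemma my_I_le (n : ℕ) {x : ℝ} (hx : 0 ≤ x) :
    (∫ t in (0:ℝ)..x, t ^ n * Real.exp (-t)) ≤ x ^ (n + 1) / (n + 1) := by
  have h1 : (∫ t in (0:ℝ)..x, t ^ n * Real.exp (-t)) ≤ ∫ t in (0:ℝ)..x, t ^ n := by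
    apply intervalIntegral.integral_mono_on hx
    · exact (Continuous.intervalIntegrable (by continuity) 0 x)
    · exact intervalIntegral.intervalIntegrable_pow n
    · intro t ht
      have h2 : Real.exp (-t) ≤ 1 := Real.exp_le_one_iff.mpr (by linarith [ht.1])
      exact mul_le_of_le_one_right (pow_nonneg ht.1 n) h2
  have h2 : (∫ t in (0:ℝ)..x, t ^ n) = x ^ (n + 1) / (n + 1) := by
    rw [integral_pow]
    simp
  rw [h2] at h1; exact h1

private lemma my_I_succ (n : ℕ) (x : ℝ) :
    (∫ t in (0:ℝ)..x, t ^ (n + 1) * Real.exp (-t))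
      = (n + 1) * (∫ t in (0:ℝ)..x, t ^ n * Real.exp (-t)) - x ^ (n + 1) * Real.exp (-x) := by
  have hu : ∀ t ∈ Set.uIcc (0:ℝ) x, HasDerivAt (fun t : ℝ => t ^ (n + 1))
      (((n:ℝ) + 1) * t ^ n) t := by
    intro t _
    simpa using hasDerivAt_pow (n + 1) t
  have hv : ∀ t ∈ Set.uIcc (0:ℝ) x, HasDerivAt (fun t : ℝ => -Real.exp (-t))
      (Real.exp (-t)) t := by
    intro t _
    have h1 : HasDerivAt (fun t : ℝ => Real.exp (-t)) (-Real.exp (-t)) t := by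
      simpa [Function.comp_def] using (Real.hasDerivAt_exp (-t)).comp t (hasDerivAt_neg t)
    simpa using h1.fun_neg
  have hint := intervalIntegral.integral_mul_deriv_eq_deriv_mul hu hv
    (Continuous.intervalIntegrable (by continuity) 0 x)
    (Continuous.intervalIntegrable (by continuity) 0 x)
  have h3 : (∫ t in (0:ℝ)..x, ((n:ℝ) + 1) * t ^ n * -Real.exp (-t))
      = -(((n:ℝ) + 1) * ∫ t in (0:ℝ)..x, t ^ n * Real.exp (-t)) := by
    rw [← intervalIntegral.integral_const_mul, ← intervalIntegral.integral_neg]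
    apply intervalIntegral.integral_congr
    intro t _
    ring
  rw [h3] at hint
  rw [hint]; simp; ring

private lemma my_regGammaP_eq (n : ℕ) (x : ℝ) :
    regGammaP ((n:ℝ) + 1) x = (∫ t in (0:ℝ)..x, t ^ n * Real.exp (-t)) / n.factorial := by
  unfold regGammaP
  rw [Real.Gamma_nat_eq_factorial]
  rw [show ((n:ℝ) + 1 - 1) = (n:ℝ) by ring]
  congr 1
  simp_rw [Real.rpow_natCast]

private lemma my_regGammaP_nonneg (n : ℕ) {x : ℝ} (hx : 0 ≤ x) :
    0 ≤ regGammaP ((n:ℝ) + 1) x := by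
  rw [my_regGammaP_eq]
  exact div_nonneg (my_I_nonneg n hx) (Nat.cast_nonneg _)

private lemma my_regGammaP_le (n : ℕ) {x : ℝ} (hx : 0 ≤ x) :
    regGammaP ((n:ℝ) + 1) x ≤ (1 - Real.exp (-x)) ^ (n + 1) := by
  induction n with
  | zero =>
      rw [my_regGammaP_eq]
      have h0 : (∫ t in (0:ℝ)..x, t ^ 0 * Real.exp (-t)) = 1 - Real.exp (-x) := by
        simp only [pow_zero, one_mul]
        rw [show (fun t : ℝ => Real.exp (-t)) = fun t : ℝ => Real.exp (-t) from rfl]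
        rw [intervalIntegral.integral_comp_neg (fun t : ℝ => Real.exp t)]
        rw [integral_exp]
        simp
      rw [h0]
      simp
  | succ n ih =>
      have heq : regGammaP ((n:ℝ) + 1 + 1) x
          = regGammaP ((n:ℝ) + 1) x - x ^ (n + 1) * Real.exp (-x) / (n + 1).factorial := by
        have e1 := my_regGammaP_eq (n + 1) x
        push_cast at e1
        rw [e1, my_regGammaP_eq, my_I_succ]
        rw [Nat.factorial_succ]
        push_cast
        have hne : ((n:ℝ) + 1) ≠ 0 := by positivity
        have hfne : ((n.factorial : ℝ)) ≠ 0 := by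
          exact_mod_cast Nat.factorial_ne_zero n
        field_simp
      have hP_le : regGammaP ((n:ℝ) + 1) x ≤ x ^ (n + 1) / (n + 1).factorial := by
        rw [my_regGammaP_eq]
        calc (∫ t in (0:ℝ)..x, t ^ n * Real.exp (-t)) / n.factorial
            ≤ (x ^ (n + 1) / (n + 1)) / n.factorial := by
              have hfac : (0:ℝ) < (n.factorial : ℝ) := by
                exact_mod_cast Nat.factorial_pos n
              exact (div_le_div_iff_of_pos_right hfac).mpr (my_I_le n hx)
          _ = x ^ (n + 1) / (n + 1).factorial := by
              rw [div_div, Nat.factorial_succ]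
              push_cast
              ring_nf
      have hP0 : 0 ≤ regGammaP ((n:ℝ) + 1) x := my_regGammaP_nonneg n hx
      have he1 : Real.exp (-x) ≤ 1 := Real.exp_le_one_iff.mpr (by linarith)
      have he0 : 0 < Real.exp (-x) := Real.exp_pos _
      have key : regGammaP ((n:ℝ) + 1 + 1) x
          ≤ (1 - Real.exp (-x)) * regGammaP ((n:ℝ) + 1) x := by
        rw [heq]
        have : Real.exp (-x) * regGammaP ((n:ℝ) + 1) x
            ≤ Real.exp (-x) * (x ^ (n + 1) / (n + 1).factorial) :=
          mul_le_mul_of_nonneg_left hP_le he0.le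
        have h2 : Real.exp (-x) * (x ^ (n + 1) / (n + 1).factorial)
            = x ^ (n + 1) * Real.exp (-x) / (n + 1).factorial := by ring
        linarith
      have : ((n:ℝ) + 1 + 1) = (((n + 1 : ℕ)):ℝ) + 1 := by push_cast; ring
      rw [this] at key
      calc regGammaP (((n + 1 : ℕ):ℝ) + 1) x
          ≤ (1 - Real.exp (-x)) * regGammaP ((n:ℝ) + 1) x := key
        _ ≤ (1 - Real.exp (-x)) * (1 - Real.exp (-x)) ^ (n + 1) :=
            mul_le_mul_of_nonneg_left ih (by linarith)
        _ = (1 - Real.exp (-x)) ^ (n + 1 + 1) := by ring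

private lemma my_dDF_eq (k : ℕ) :
    evenDF k / oddDF k = ((2:ℝ) ^ k * k.factorial) ^ 2 / (2 * k + 1).factorial := by
  unfold evenDF oddDF
  rw [div_div_eq_mul_div, sq]

private lemma my_dDF_pos (k : ℕ) : 0 < evenDF k / oddDF k := by
  rw [my_dDF_eq]
  have h2 : (0:ℝ) < (k.factorial : ℝ) := by exact_mod_cast Nat.factorial_pos k
  have h3 : (0:ℝ) < ((2 * k + 1).factorial : ℝ) := by exact_mod_cast Nat.factorial_pos _
  positivity

private lemma my_dDF_succ_le (k : ℕ) : evenDF (k + 1) / oddDF (k + 1) ≤ evenDF k / oddDF k := by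
  rw [my_dDF_eq, my_dDF_eq]
  have h2 : (0:ℝ) < (k.factorial : ℝ) := by exact_mod_cast Nat.factorial_pos k
  have h3 : (0:ℝ) < ((2 * k + 1).factorial : ℝ) := by exact_mod_cast Nat.factorial_pos _
  have h4 : (0:ℝ) < ((2 * (k + 1) + 1).factorial : ℝ) := by exact_mod_cast Nat.factorial_pos _
  rw [div_le_div_iff₀ h4 h3]
  have hfs : ((2 * (k + 1) + 1).factorial : ℝ)
      = (2 * k + 3) * ((2 * k + 2) * (2 * k + 1).factorial) := by
    rw [show 2 * (k + 1) + 1 = (2 * k + 2) + 1 by ring, Nat.factorial_succ,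
      show 2 * k + 2 = (2 * k + 1) + 1 by ring, Nat.factorial_succ]
    push_cast
    ring
  have hP : (0:ℝ) < ((2:ℝ) ^ k * k.factorial) ^ 2 * (2 * k + 1).factorial := by positivity
  have hL : ((2:ℝ) ^ (k + 1) * (k + 1).factorial) ^ 2 * ((2 * k + 1).factorial : ℝ)
      = 4 * ((k:ℝ) + 1) ^ 2 * (((2:ℝ) ^ k * k.factorial) ^ 2 * (2 * k + 1).factorial) := by
    rw [Nat.factorial_succ]
    push_cast
    ring
  have hR : ((2:ℝ) ^ k * k.factorial) ^ 2 * ((2 * (k + 1) + 1).factorial : ℝ)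
      = (2 * (k:ℝ) + 3) * (2 * (k:ℝ) + 2) *
        (((2:ℝ) ^ k * k.factorial) ^ 2 * (2 * k + 1).factorial) := by
    rw [hfs]
    ring
  rw [hL, hR]
  have hk : (0:ℝ) ≤ (k:ℝ) := Nat.cast_nonneg k
  nlinarith [mul_nonneg hk hP.le, hP.le]

private lemma my_dDF_le (m k : ℕ) : evenDF (k + m) / oddDF (k + m) ≤ evenDF m / oddDF m := by
  induction k with
  | zero => simp
  | succ k ih =>
      calc evenDF (k + 1 + m) / oddDF (k + 1 + m)
          = evenDF ((k + m) + 1) / oddDF ((k + m) + 1) := by ring_nf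
        _ ≤ evenDF (k + m) / oddDF (k + m) := my_dDF_succ_le (k + m)
        _ ≤ evenDF m / oddDF m := ih

/-- Tail bound for the series of Theorem 2; the series is truncated after the
`n`-th term with `n ≥ -1`, here encoded via `m = n + 1 : ℕ`, so the tail starts
at index `m`, and `B_n = ((2m)!!/(2m+1)!!)(|r|/(2π))(1-e^{-q})^{m+1}(r²/(1+r²))^m`. -/
theorem tail_bound_P (h r : ℝ) (m : ℕ) :
    0 ≤ (|r| / (2 * Real.pi * (1 + r ^ 2))) *
        ∑' k : ℕ, (evenDF (k + m) / oddDF (k + m)) *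
          regGammaP (k + m + 1) ((1 + r ^ 2) * h ^ 2 / 2) *
            (r ^ 2 / (1 + r ^ 2)) ^ (k + m) ∧
    (|r| / (2 * Real.pi * (1 + r ^ 2))) *
        ∑' k : ℕ, (evenDF (k + m) / oddDF (k + m)) *
          regGammaP (k + m + 1) ((1 + r ^ 2) * h ^ 2 / 2) *
            (r ^ 2 / (1 + r ^ 2)) ^ (k + m) ≤
      ((evenDF m / oddDF m) * (|r| / (2 * Real.pi)) *
          (1 - Real.exp (-((1 + r ^ 2) * h ^ 2 / 2))) ^ (m + 1) *
            (r ^ 2 / (1 + r ^ 2)) ^ m) /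
        (1 + Real.exp (-((1 + r ^ 2) * h ^ 2 / 2)) * r ^ 2) ∧
    ((evenDF m / oddDF m) * (|r| / (2 * Real.pi)) *
          (1 - Real.exp (-((1 + r ^ 2) * h ^ 2 / 2))) ^ (m + 1) *
            (r ^ 2 / (1 + r ^ 2)) ^ m) /
        (1 + Real.exp (-((1 + r ^ 2) * h ^ 2 / 2)) * r ^ 2) ≤
      (evenDF m / oddDF m) * (|r| / (2 * Real.pi)) *
          (1 - Real.exp (-((1 + r ^ 2) * h ^ 2 / 2))) ^ (m + 1) *
            (r ^ 2 / (1 + r ^ 2)) ^ m := by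
  set q : ℝ := (1 + r ^ 2) * h ^ 2 / 2 with hq_def
  set e : ℝ := Real.exp (-q) with he_def
  set x : ℝ := r ^ 2 / (1 + r ^ 2) with hx_def
  have hr2 : (0:ℝ) < 1 + r ^ 2 := by positivity
  have hq : 0 ≤ q := by positivity
  have he0 : 0 < e := Real.exp_pos _
  have he1 : e ≤ 1 := Real.exp_le_one_iff.mpr (by linarith)
  have hx0 : 0 ≤ x := by positivity
  have hx1 : x < 1 := by
    rw [hx_def, div_lt_one hr2]; linarith
  have hρ0 : 0 ≤ (1 - e) * x := mul_nonneg (by linarith) hx0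
  have hρ1 : (1 - e) * x < 1 := by
    calc (1 - e) * x ≤ 1 * x := by
          apply mul_le_mul_of_nonneg_right (by linarith) hx0
      _ = x := one_mul x
      _ < 1 := hx1
  -- the function and its bounds
  set f : ℕ → ℝ := fun k => (evenDF (k + m) / oddDF (k + m)) *
      regGammaP (k + m + 1) q * x ^ (k + m) with hf_def
  have hcast : ∀ k : ℕ, ((k:ℝ) + (m:ℝ) + 1) = (((k + m : ℕ)):ℝ) + 1 := by
    intro k; push_cast; ring
  have hf_nonneg : ∀ k, 0 ≤ f k := by
    intro k
    apply mul_nonneg (mul_nonneg (my_dDF_pos _).le _) (pow_nonneg hx0 _)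
    rw [hcast k]
    exact my_regGammaP_nonneg (k + m) hq
  set D : ℝ := (evenDF m / oddDF m) * (1 - e) ^ (m + 1) * x ^ m with hD_def
  have hD0 : 0 ≤ D := by
    apply mul_nonneg (mul_nonneg (my_dDF_pos _).le (pow_nonneg (by linarith) _))
      (pow_nonneg hx0 _)
  have hf_le : ∀ k, f k ≤ D * ((1 - e) * x) ^ k := by
    intro k
    have h1 : regGammaP ((k:ℝ) + (m:ℝ) + 1) q ≤ (1 - e) ^ (k + m + 1) := by
      rw [hcast k]
      exact my_regGammaP_le (k + m) hq
    have h0 : 0 ≤ regGammaP ((k:ℝ) + (m:ℝ) + 1) q := by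
      rw [hcast k]; exact my_regGammaP_nonneg (k + m) hq
    calc f k ≤ (evenDF m / oddDF m) * (1 - e) ^ (k + m + 1) * x ^ (k + m) := by
          apply mul_le_mul_of_nonneg_right _ (pow_nonneg hx0 _)
          apply mul_le_mul (my_dDF_le m k) h1 h0 (my_dDF_pos m).le
      _ = D * ((1 - e) * x) ^ k := by
          rw [hD_def]
          rw [show k + m + 1 = (m + 1) + k by ring, pow_add, pow_add, mul_pow]
          ring
  have hg_sum : Summable (fun k : ℕ => D * ((1 - e) * x) ^ k) :=
    (summable_geometric_of_lt_one hρ0 hρ1).mul_left D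
  have hf_sum : Summable f := by
    apply Summable.of_nonneg_of_le hf_nonneg hf_le hg_sum
  have htsum_nonneg : 0 ≤ ∑' k, f k := tsum_nonneg hf_nonneg
  have htsum_le : (∑' k, f k) ≤ D * (1 - (1 - e) * x)⁻¹ := by
    calc (∑' k, f k) ≤ ∑' k, D * ((1 - e) * x) ^ k := Summable.tsum_le_tsum hf_le hf_sum hg_sum
      _ = D * (1 - (1 - e) * x)⁻¹ := by
          rw [tsum_mul_left, tsum_geometric_of_lt_one hρ0 hρ1]
  have hden : 1 - (1 - e) * x = (1 + e * r ^ 2) / (1 + r ^ 2) := by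
    rw [hx_def]
    field_simp
    ring
  have hden0 : (0:ℝ) < 1 + e * r ^ 2 := by positivity
  have hpi : (0:ℝ) < Real.pi := Real.pi_pos
  have hc0 : (0:ℝ) ≤ |r| / (2 * Real.pi * (1 + r ^ 2)) := by positivity
  refine ⟨mul_nonneg hc0 htsum_nonneg, ?_, ?_⟩
  · calc (|r| / (2 * Real.pi * (1 + r ^ 2))) * ∑' k, f k
        ≤ (|r| / (2 * Real.pi * (1 + r ^ 2))) * (D * (1 - (1 - e) * x)⁻¹) :=
          mul_le_mul_of_nonneg_left htsum_le hc0
      _ = ((evenDF m / oddDF m) * (|r| / (2 * Real.pi)) * (1 - e) ^ (m + 1) * x ^ m) /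
            (1 + e * r ^ 2) := by
          have hne1 : (1 + r ^ 2) ≠ 0 := ne_of_gt hr2
          have hne2 : (1 + e * r ^ 2) ≠ 0 := ne_of_gt hden0
          rw [hden, hD_def, inv_div]
          generalize (1 - e) ^ (m + 1) = E
          generalize x ^ m = X
          generalize evenDF m / oddDF m = d
          field_simp
  · apply div_le_self _ (by nlinarith)
    apply mul_nonneg (mul_nonneg (mul_nonneg (my_dDF_pos m).le (by positivity))
      (pow_nonneg (by linarith) _)) (pow_nonneg hx0 _)
end
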